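/- Given the data (i)–(v) of the general construction, the bracket [l₁+v₁+d₁, l₂+v₂+d₂] = ([l₁,l₂]_L + d₁·l₂ − d₂·l₁) + (σ(l₁,l₂) + d₁·v₂ − d₂·v₁ + τ(d₁,d₂)) + [d₁,d₂]_D on the vector space E = L ⊕ V ⊕ D is a Lie algebra bracket over k (it is bilinear, alternating, and satisfies the Jacobi identity). -/

import Mathlib

/-!
The general construction of Lie algebras (paper §1.4):
given Lie algebras `L`, `D` over a field `k` of characteristic zero, an action of `D`
on `L` by derivations, a `D`-module `V` regarded as a trivial `L`-module, a central
2-cocycle `σ : L × L → V` which is `D`-equivariant, and a 2-cocycle `τ : D × D → V`,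
the bracket on `E = L ⊕ V ⊕ D` defined by
`[l₁+v₁+d₁, l₂+v₂+d₂] = ([l₁,l₂] + d₁·l₂ − d₂·l₁) + (σ(l₁,l₂) + d₁·v₂ − d₂·v₁ + τ(d₁,d₂)) + [d₁,d₂]`
is a Lie algebra bracket: bilinear, alternating and satisfying the Jacobi identity.
-/

/-- The bracket of the general construction on `E = L × V × D`. -/
def gcBracket {L V D : Type*} [LieRing L] [AddCommGroup V] [LieRing D]
    (act : D → L → L) (actV : D → V → V) (σ : L → L → V) (τ : D → D → V) :
    (L × V × D) → (L × V × D) → (L × V × D) :=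
  fun e₁ e₂ =>
    (⁅e₁.1, e₂.1⁆ + act e₁.2.2 e₂.1 - act e₂.2.2 e₁.1,
     σ e₁.1 e₂.1 + actV e₁.2.2 e₂.2.1 - actV e₂.2.2 e₁.2.1 + τ e₁.2.2 e₂.2.2,
     ⁅e₁.2.2, e₂.2.2⁆)

theorem gc_bracket_is_lie_bracket
    {k L V D : Type*} [Field k] [CharZero k]
    [LieRing L] [LieAlgebra k L] [LieRing D] [LieAlgebra k D]
    [AddCommGroup V] [Module k V]
    -- (ii) an action of `D` on `L` by derivations of `L`
    (act : D →ₗ[k] L →ₗ[k] L)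
    (hactLie : ∀ d₁ d₂ : D, ∀ l : L, act ⁅d₁, d₂⁆ l = act d₁ (act d₂ l) - act d₂ (act d₁ l))
    (hactDer : ∀ (d : D) (l₁ l₂ : L), act d ⁅l₁, l₂⁆ = ⁅act d l₁, l₂⁆ + ⁅l₁, act d l₂⁆)
    -- (iii) a `D`-module `V` (regarded as a trivial `L`-module)
    (actV : D →ₗ[k] V →ₗ[k] V)
    (hactVLie : ∀ d₁ d₂ : D, ∀ v : V, actV ⁅d₁, d₂⁆ v = actV d₁ (actV d₂ v) - actV d₂ (actV d₁ v))
    -- (iv) an alternating central 2-cocycle `σ : L × L → V`, `D`-equivariant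
    (σ : L →ₗ[k] L →ₗ[k] V)
    (hσalt : ∀ l : L, σ l l = 0)
    (hσcoc : ∀ l₁ l₂ l₃ : L, σ ⁅l₁, l₂⁆ l₃ + σ ⁅l₂, l₃⁆ l₁ + σ ⁅l₃, l₁⁆ l₂ = 0)
    (hσequiv : ∀ (d : D) (l₁ l₂ : L), actV d (σ l₁ l₂) = σ (act d l₁) l₂ + σ l₁ (act d l₂))
    -- (v) an alternating 2-cocycle `τ : D × D → V`
    (τ : D →ₗ[k] D →ₗ[k] V)
    (hτalt : ∀ d : D, τ d d = 0)
    (hτcoc : ∀ d₁ d₂ d₃ : D,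
      actV d₁ (τ d₂ d₃) + actV d₂ (τ d₃ d₁) + actV d₃ (τ d₁ d₂)
        = τ ⁅d₁, d₂⁆ d₃ + τ ⁅d₂, d₃⁆ d₁ + τ ⁅d₃, d₁⁆ d₂) :
    -- the bracket of the general construction:
    let br := gcBracket (fun d l => act d l) (fun d v => actV d v)
        (fun l₁ l₂ => σ l₁ l₂) (fun d₁ d₂ => τ d₁ d₂)
    -- is k-bilinear,
    (∀ (a : k) (e₁ e₁' e₂ : L × V × D),
        br (a • e₁ + e₁') e₂ = a • br e₁ e₂ + br e₁' e₂) ∧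
    (∀ (a : k) (e₁ e₂ e₂' : L × V × D),
        br e₁ (a • e₂ + e₂') = a • br e₁ e₂ + br e₁ e₂') ∧
    -- alternating,
    (∀ e : L × V × D, br e e = 0) ∧
    -- and satisfies the Jacobi identity.
    (∀ e₁ e₂ e₃ : L × V × D,
        br (br e₁ e₂) e₃ + br (br e₂ e₃) e₁ + br (br e₃ e₁) e₂ = 0) := by
  intro br
  have hσskew : ∀ l₁ l₂ : L, σ l₁ l₂ = - σ l₂ l₁ := by
    intro l₁ l₂
    have h := hσalt (l₁ + l₂)
    simp only [map_add, LinearMap.add_apply, hσalt] at h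
    rw [eq_neg_iff_add_eq_zero]
    linear_combination (norm := abel) h
  refine ⟨?_, ?_, ?_, ?_⟩
  · intro a e₁ e₁' e₂
    simp only [br, gcBracket, Prod.smul_mk, Prod.mk_add_mk, Prod.fst_add, Prod.snd_add,
      Prod.smul_fst, Prod.smul_snd, Prod.mk.injEq, map_add, map_smul, LinearMap.add_apply,
      LinearMap.smul_apply, add_lie, smul_lie, smul_add, smul_sub]
    refine ⟨by abel, by abel, trivial⟩
  · intro a e₁ e₂ e₂'
    simp only [br, gcBracket, Prod.smul_mk, Prod.mk_add_mk, Prod.fst_add, Prod.snd_add,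
      Prod.smul_fst, Prod.smul_snd, Prod.mk.injEq, map_add, map_smul, LinearMap.add_apply,
      LinearMap.smul_apply, lie_add, lie_smul, smul_add, smul_sub]
    refine ⟨by abel, by abel, trivial⟩
  · intro e
    simp [br, gcBracket, hσalt, hτalt]
  · rintro ⟨l₁, v₁, d₁⟩ ⟨l₂, v₂, d₂⟩ ⟨l₃, v₃, d₃⟩
    simp only [br, gcBracket, Prod.mk_add_mk, Prod.mk.injEq, Prod.mk_eq_zero]
    refine ⟨?_, ?_, ?_⟩
    · simp only [hactLie, hactDer, map_add, map_sub, add_lie, sub_lie, lie_lie]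
      have h1 : ⁅l₃, ⁅l₂, l₁⁆⁆ = -⁅l₃, ⁅l₁, l₂⁆⁆ := by
        rw [← lie_skew l₁ l₂, lie_neg, neg_neg]
      have h2 : ⁅l₁, ⁅l₃, l₂⁆⁆ = -⁅l₁, ⁅l₂, l₃⁆⁆ := by
        rw [← lie_skew l₂ l₃, lie_neg, neg_neg]
      have h3 : ⁅l₂, ⁅l₁, l₃⁆⁆ = -⁅l₂, ⁅l₃, l₁⁆⁆ := by
        rw [← lie_skew l₃ l₁, lie_neg, neg_neg]
      have h4 : ∀ (x : L) (d : D) (y : L), ⁅x, act d y⁆ = -⁅act d y, x⁆ := by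
        intro x d y; rw [← lie_skew]
      have j := lie_jacobi l₁ l₂ l₃
      rw [h1, h2, h3, h4 l₁ d₃ l₂, h4 l₂ d₁ l₃, h4 l₃ d₂ l₁]
      linear_combination (norm := abel) j + j
    · simp only [hactVLie, hσequiv, map_add, map_sub, LinearMap.add_apply, LinearMap.sub_apply]
      have h4 : ∀ (x : L) (d : D) (y : L), σ x (act d y) = -σ (act d y) x := by
        intro x d y; rw [hσskew]
      rw [h4 l₁ d₃ l₂, h4 l₂ d₁ l₃, h4 l₃ d₂ l₁]
      linear_combination (norm := abel) hσcoc l₁ l₂ l₃ - hτcoc d₁ d₂ d₃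
    · simp only [lie_lie]
      have h1 : ⁅d₃, ⁅d₂, d₁⁆⁆ = -⁅d₃, ⁅d₁, d₂⁆⁆ := by
        rw [← lie_skew d₁ d₂, lie_neg, neg_neg]
      have h2 : ⁅d₁, ⁅d₃, d₂⁆⁆ = -⁅d₁, ⁅d₂, d₃⁆⁆ := by
        rw [← lie_skew d₂ d₃, lie_neg, neg_neg]
      have h3 : ⁅d₂, ⁅d₁, d₃⁆⁆ = -⁅d₂, ⁅d₃, d₁⁆⁆ := by
        rw [← lie_skew d₃ d₁, lie_neg, neg_neg]
      have j := lie_jacobi d₁ d₂ d₃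
      rw [h1, h2, h3]
      linear_combination (norm := abel) j + j
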